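/- arXiv:1006.4063 — 3 statements merged into one kernel-verified Lean document; each statement's English description precedes it below -/
import Mathlib

section
/- For every natural number n ≥ 1, ∑_{j=1}^{n} H_{n+1−j}/j = H_{n+1}² − H_{n+1}^{(2)}, where H_k is the k-th harmonic number and H_k^{(2)} = ∑_{i=1}^{k} 1/i² is the k-th harmonic number of order 2. -/
open Finset

noncomputable def H (n : ℕ) : ℝ := ∑ i ∈ Finset.Icc 1 n, (1:ℝ)/i
noncomputable def H2 (n : ℕ) : ℝ := ∑ i ∈ Finset.Icc 1 n, (1:ℝ)/(i:ℝ)^2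

lemma H_succ (m : ℕ) : H (m+1) = H m + 1/((m:ℝ)+1) := by
  unfold H
  rw [Finset.sum_Icc_succ_top (by omega : 1 ≤ m+1)]
  push_cast; ring

lemma H2_succ (m : ℕ) : H2 (m+1) = H2 m + 1/((m:ℝ)+1)^2 := by
  unfold H2
  rw [Finset.sum_Icc_succ_top (by omega : 1 ≤ m+1)]
  push_cast; ring

lemma reflect (n : ℕ) (f : ℕ → ℝ) :
    ∑ j ∈ Icc 1 n, f (n+1-j) = ∑ j ∈ Icc 1 n, f j := by
  apply Finset.sum_nbij' (fun i => n+1-i) (fun i => n+1-i) <;>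
    intros a ha <;> simp_all [Finset.mem_Icc] <;> omega

lemma pf (x y c : ℝ) (hx : x ≠ 0) (hy : y ≠ 0) (hc : c ≠ 0) (h : x + y = c) :
    1/x/y = 1/c*(1/y+1/x) := by
  subst h; field_simp

lemma Hshift (n : ℕ) : ∑ j ∈ Icc 1 n, 1/((j:ℝ)+1) = H (n+1) - 1 := by
  induction n with
  | zero => simp [H]
  | succ n ih =>
    rw [Finset.sum_Icc_succ_top (by omega : 1 ≤ n+1), H_succ (n+1), ih]
    push_cast; ring

lemma key (n : ℕ) :
    ∑ j ∈ Icc 1 n, H (n+1-j)/(j:ℝ) = (H (n+1))^2 - H2 (n+1) := by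
  induction n with
  | zero => simp [H, H2]
  | succ n ih =>
    rw [Finset.sum_Icc_succ_top (by omega : 1 ≤ n+1)]
    have h1 : ∀ j ∈ Icc 1 n, H (n+1+1-j)/(j:ℝ)
        = H (n+1-j)/(j:ℝ) + (1/((n:ℝ)+2)) * (1/(j:ℝ) + 1/((n:ℝ)+2-(j:ℝ))) := by
      intro j hj
      simp only [Finset.mem_Icc] at hj
      have hjr : (1:ℝ) ≤ (j:ℝ) := by exact_mod_cast hj.1
      have hjn : (j:ℝ) ≤ (n:ℝ) := by exact_mod_cast hj.2
      have e1 : n+1+1-j = (n+1-j)+1 := by omega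
      rw [e1, H_succ]
      have e2 : ((n+1-j : ℕ) : ℝ) = (n:ℝ)+1-(j:ℝ) := by
        have : j ≤ n+1 := by omega
        push_cast [Nat.cast_sub this]; ring
      rw [e2]
      have h0 : (j:ℝ) ≠ 0 := by linarith
      have h0' : (n:ℝ)+2-(j:ℝ) ≠ 0 := by linarith
      have h0'' : (n:ℝ)+2 ≠ 0 := by positivity
      have hx : (n:ℝ)+1-(j:ℝ)+1 = (n:ℝ)+2-(j:ℝ) := by ring
      rw [hx, add_div]
      congr 1
      exact pf _ _ _ h0' h0 h0'' (by ring)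
    rw [Finset.sum_congr rfl h1, Finset.sum_add_distrib, ih]
    have e3 : n+1+1-(n+1) = 1 := by omega
    rw [e3]
    have hH1 : H 1 = 1 := by simp [H]
    rw [hH1]
    rw [← Finset.mul_sum, Finset.sum_add_distrib]
    have h2 : ∑ j ∈ Icc 1 n, 1/((n:ℝ)+2-(j:ℝ)) = H (n+1) - 1 := by
      rw [← Hshift n, ← reflect n (fun j => 1/((j:ℝ)+1))]
      apply Finset.sum_congr rfl
      intro j hj
      simp only [Finset.mem_Icc] at hj
      have : ((n+1-j : ℕ) : ℝ) = (n:ℝ)+1-(j:ℝ) := by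
        push_cast [Nat.cast_sub (by omega : j ≤ n+1)]; ring
      rw [this]
      ring_nf
    have h3 : ∑ j ∈ Icc 1 n, 1/(j:ℝ) = H n := by
      unfold H; rfl
    rw [h2, h3]
    rw [H_succ (n+1), H2_succ (n+1)]
    have hHn : H n = H (n+1) - 1/((n:ℝ)+1) := by rw [H_succ]; ring
    rw [hHn]
    have h0 : ((n:ℝ)+1) ≠ 0 := by positivity
    have h0' : ((n:ℝ)+1+1) ≠ 0 := by positivity
    push_cast
    field_simp
    ring

theorem stmt5 (n : ℕ) (hn : 1 ≤ n) :
    ∑ j ∈ Icc 1 n, H (n+1-j)/(j:ℝ) = (H (n+1))^2 - H2 (n+1) := key n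
end

section
/- Define B_n for n ≥ 0 by B_0 = 0 and, for n ≥ 1, B_n = C(n−1,2) + (2(n−1)/n)∑_{j=1}^{n} M_{j−1} + (2/n)∑_{j=1}^{n} B_{j−1} + (1/n)∑_{j=1}^{n} M_{j−1}M_{n−j}, where M_k = 2(k+1)H_k − 4k. Then for all n ≥ 1, B_n = 2(n+1)²(H_n² − H_n^{(2)}) − (8n+2)(n+1)H_n + (23n² + 17n)/2. -/
open Finset

noncomputable def M (n : ℕ) : ℝ := 2*((n:ℝ)+1)*H n - 4*(n:ℝ)

lemma H0 : H 0 = 0 := by simp [H]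
lemma H20 : H2 0 = 0 := by simp [H2]

lemma Hs (n : ℕ) : H (n+1) = H n + 1/((n:ℝ)+1) := by
  unfold H
  rw [Finset.sum_Icc_succ_top (by omega)]
  push_cast; ring

lemma H2s (n : ℕ) : H2 (n+1) = H2 n + 1/((n:ℝ)+1)^2 := by
  unfold H2
  rw [Finset.sum_Icc_succ_top (by omega)]
  push_cast; ring

lemma M0 : M 0 = 0 := by simp [M, H0]

lemma Msucc (n : ℕ) : M (n+1) = M n + 2*H (n+1) - 2 := by
  unfold M; rw [Hs]; push_cast
  have : (n:ℝ)+1 ≠ 0 := by positivity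
  field_simp; ring

lemma reindex (g : ℕ → ℝ) (n : ℕ) :
    ∑ j ∈ Icc 1 n, g (j-1) = ∑ k ∈ range n, g k := by
  induction n with
  | zero => simp
  | succ n ih =>
      rw [Finset.sum_Icc_succ_top (by omega), Finset.sum_range_succ, ih]
      norm_num

lemma Hr (n : ℕ) : ∑ k ∈ range n, (1:ℝ)/((k:ℝ)+1) = H n := by
  induction n with
  | zero => simp [H0]
  | succ n ih => rw [Finset.sum_range_succ, ih, Hs]

lemma reflH (n : ℕ) : ∑ k ∈ range n, (1:ℝ)/((n-k : ℕ):ℝ) = H n := by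
  induction n with
  | zero => simp [H0]
  | succ n ih =>
      rw [Finset.sum_range_succ']
      simp only [Nat.succ_sub_succ]
      rw [ih, Hs]
      norm_num

lemma PF (n : ℕ) :
    ∑ k ∈ range n, 1/(((k:ℝ)+1)*((n-k : ℕ):ℝ)) = 2*H n/((n:ℝ)+1) := by
  have h : ∀ k ∈ range n, 1/(((k:ℝ)+1)*((n-k:ℕ):ℝ))
      = (1/((n:ℝ)+1)) * ((1:ℝ)/((k:ℝ)+1) + (1:ℝ)/((n-k:ℕ):ℝ)) := by
    intro k hk
    rw [mem_range] at hk
    have h1 : ((n-k:ℕ):ℝ) = (n:ℝ) - k := by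
      rw [Nat.cast_sub hk.le]
    have h2 : (k:ℝ)+1 ≠ 0 := by positivity
    have h3 : (n:ℝ) - (k:ℝ) ≠ 0 := by
      have : (k:ℝ) < n := by exact_mod_cast hk
      linarith
    have h4 : (n:ℝ)+1 ≠ 0 := by positivity
    rw [h1]; field_simp; ring
  rw [Finset.sum_congr rfl h, ← Finset.mul_sum, Finset.sum_add_distrib, Hr, reflH]
  ring

lemma Fconv (n : ℕ) : ∑ k ∈ range n, H k/((n-k:ℕ):ℝ) = (H n)^2 - H2 n := by
  induction n with
  | zero => simp [H0, H20]
  | succ n ih =>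
      rw [Finset.sum_range_succ']
      have h : ∀ k ∈ range n, H (k+1)/(((n+1)-(k+1):ℕ):ℝ)
          = H k/((n-k:ℕ):ℝ) + 1/(((k:ℝ)+1)*((n-k:ℕ):ℝ)) := by
        intro k hk
        rw [mem_range] at hk
        have e : n+1-(k+1) = n-k := by omega
        have h1 : ((n-k:ℕ):ℝ) ≠ 0 := by
          have : n - k ≠ 0 := by omega
          exact_mod_cast this
        have h2 : (k:ℝ)+1 ≠ 0 := by positivity
        rw [e, Hs]
        field_simp
      rw [Finset.sum_congr rfl h, Finset.sum_add_distrib, ih, PF, H0, Hs, H2s]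
      have h4 : (n:ℝ)+1 ≠ 0 := by positivity
      field_simp; ring

lemma A1 (n : ℕ) : ∑ k ∈ range n, H k = (n:ℝ)*H n - n := by
  induction n with
  | zero => simp
  | succ n ih =>
      rw [Finset.sum_range_succ, ih, Hs]
      have h4 : (n:ℝ)+1 ≠ 0 := by positivity
      push_cast; field_simp; ring

lemma Rconv (n : ℕ) : ∑ k ∈ range n, M k/((n-k:ℕ):ℝ)
    = 2*((n:ℝ)+1)*((H n)^2 - H2 n) - 6*(n:ℝ)*H n + 6*(n:ℝ) := by
  have h : ∀ k ∈ range n, M k/((n-k:ℕ):ℝ)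
      = 2*((n:ℝ)+1)*(H k/((n-k:ℕ):ℝ)) - 2*H k - 4*(n:ℝ)*((1:ℝ)/((n-k:ℕ):ℝ)) + 4 := by
    intro k hk
    rw [mem_range] at hk
    have h1 : ((n-k:ℕ):ℝ) = (n:ℝ) - k := by rw [Nat.cast_sub hk.le]
    have h3 : (n:ℝ) - (k:ℝ) ≠ 0 := by
      have : (k:ℝ) < n := by exact_mod_cast hk
      linarith
    unfold M
    rw [h1]; field_simp; ring
  rw [Finset.sum_congr rfl h]
  simp only [Finset.sum_add_distrib, Finset.sum_sub_distrib, ← Finset.mul_sum]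
  rw [Fconv, A1, reflH, Finset.sum_const, Finset.card_range]
  ring

lemma T1lem (n : ℕ) : ∑ k ∈ range n, M k
    = (n:ℝ)*((n:ℝ)+1)*H n + (n:ℝ)/2 - 5*(n:ℝ)^2/2 := by
  induction n with
  | zero => simp
  | succ n ih =>
      rw [Finset.sum_range_succ, ih]
      unfold M
      rw [Hs]
      have h4 : (n:ℝ)+1 ≠ 0 := by positivity
      push_cast; field_simp; ring

lemma Glem (n : ℕ) : ∑ k ∈ range n, M k * H (n-k)
    = ((n:ℝ)+1)*((n:ℝ)+2)*((H n)^2 - H2 n) - (4*(n:ℝ)^2+6*(n:ℝ))*H n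
      + 5*(n:ℝ)^2 + 5*(n:ℝ) := by
  induction n with
  | zero => simp [H0, H20]
  | succ n ih =>
      have hR := Rconv (n+1)
      rw [Finset.sum_range_succ] at hR
      have e1 : n+1-n = 1 := by omega
      rw [e1] at hR
      norm_num at hR
      have hsplit : ∀ k ∈ range n, M k * H (n+1-k)
          = M k * H (n-k) + M k / ((n+1-k:ℕ):ℝ) := by
        intro k hk
        rw [mem_range] at hk
        have e : n+1-k = (n-k)+1 := by omega
        rw [e, Hs]
        push_cast
        ring
      rw [Finset.sum_range_succ, Finset.sum_congr rfl hsplit, Finset.sum_add_distrib, ih, e1]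
      have hH1 : H 1 = 1 := by
        rw [show (1:ℕ) = 0+1 from rfl, Hs, H0]; norm_num
      have hS : ∑ k ∈ range n, M k / ((n+1-k:ℕ):ℝ)
          = 2*((n:ℝ)+1+1)*((H (n+1))^2 - H2 (n+1)) - 6*((n:ℝ)+1)*H (n+1)
            + 6*((n:ℝ)+1) - M n := by
        linarith
      rw [hS, hH1, Hs, H2s]
      unfold M
      have h4 : (n:ℝ)+1 ≠ 0 := by positivity
      push_cast; field_simp; ring

lemma T3lem (m : ℕ) : ∑ k ∈ range (m+1), M k * M (m-k)
    = (2/3)*((m:ℝ)+1)*((m:ℝ)+2)*((m:ℝ)+3)*((H m)^2 - H2 m)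
      - (122*(m:ℝ)/9 + 44*(m:ℝ)^2/3 + 34*(m:ℝ)^3/9)*H m
      + 257*(m:ℝ)/27 + 146*(m:ℝ)^2/9 + 169*(m:ℝ)^3/27 := by
  induction m with
  | zero => simp [M0, H0, H20]
  | succ m ih =>
      have hsplit : ∀ k ∈ range (m+1), M k * M (m+1-k)
          = M k * M (m-k) + 2*(M k * H (m+1-k)) - 2*M k := by
        intro k hk
        rw [mem_range] at hk
        have e : m+1-k = (m-k)+1 := by omega
        rw [e, Msucc, ← e]
        ring
      rw [Finset.sum_range_succ, Finset.sum_congr rfl hsplit]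
      simp only [Finset.sum_add_distrib, Finset.sum_sub_distrib, ← Finset.mul_sum]
      rw [ih, Glem (m+1), T1lem (m+1), Nat.sub_self, M0, mul_zero, add_zero, Hs, H2s]
      have h4 : (m:ℝ)+1 ≠ 0 := by positivity
      push_cast; field_simp; ring

lemma T2lem (n : ℕ) : ∑ k ∈ range n,
      (2*((k:ℝ)+1)^2*((H k)^2 - H2 k) - (8*(k:ℝ)+2)*((k:ℝ)+1)*H k
        + (23*(k:ℝ)^2 + 17*(k:ℝ))/2)
    = (n:ℝ)*((n:ℝ)+1)*(2*(n:ℝ)+1)/3*((H n)^2 - H2 n)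
      - (2*(n:ℝ)/9 + 8*(n:ℝ)^2/3 + 28*(n:ℝ)^3/9)*H n
      - 7*(n:ℝ)/27 + 25*(n:ℝ)^2/18 + 263*(n:ℝ)^3/54 := by
  induction n with
  | zero => simp
  | succ n ih =>
      rw [Finset.sum_range_succ, ih, Hs, H2s]
      have h4 : (n:ℝ)+1 ≠ 0 := by positivity
      push_cast; field_simp; ring

theorem stmt14 (B : ℕ → ℝ) (hB0 : B 0 = 0)
    (hB : ∀ n : ℕ, 1 ≤ n → B n
      = ((n:ℝ)-1)*((n:ℝ)-2)/2
        + (2*((n:ℝ)-1)/(n:ℝ)) * ∑ j ∈ Icc 1 n, M (j-1)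
        + (2/(n:ℝ)) * ∑ j ∈ Icc 1 n, B (j-1)
        + (1/(n:ℝ)) * ∑ j ∈ Icc 1 n, M (j-1) * M (n-j)) :
    ∀ n : ℕ, 1 ≤ n →
      B n = 2*((n:ℝ)+1)^2*((H n)^2 - H2 n) - (8*(n:ℝ)+2)*((n:ℝ)+1)*H n
            + (23*(n:ℝ)^2 + 17*(n:ℝ))/2 := by
  intro n
  induction n using Nat.strong_induction_on with
  | _ n IH =>
    intro hn
    obtain ⟨m, rfl⟩ : ∃ m, n = m + 1 := ⟨n - 1, by omega⟩
    have hBk : ∀ k, k < m+1 →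
        B k = 2*((k:ℝ)+1)^2*((H k)^2 - H2 k) - (8*(k:ℝ)+2)*((k:ℝ)+1)*H k
          + (23*(k:ℝ)^2 + 17*(k:ℝ))/2 := by
      intro k hk
      rcases Nat.eq_zero_or_pos k with h0 | h1
      · subst h0
        rw [hB0]
        norm_num [H0, H20]
      · exact IH k hk h1
    have hsum1 : ∑ j ∈ Icc 1 (m+1), M (j-1)
        = ((m:ℝ)+1)*((m:ℝ)+1+1)*H (m+1) + ((m:ℝ)+1)/2 - 5*((m:ℝ)+1)^2/2 := by
      rw [reindex M (m+1), T1lem (m+1)]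
      push_cast; ring
    have hsum2 : ∑ j ∈ Icc 1 (m+1), B (j-1)
        = ((m:ℝ)+1)*((m:ℝ)+1+1)*(2*((m:ℝ)+1)+1)/3*((H (m+1))^2 - H2 (m+1))
          - (2*((m:ℝ)+1)/9 + 8*((m:ℝ)+1)^2/3 + 28*((m:ℝ)+1)^3/9)*H (m+1)
          - 7*((m:ℝ)+1)/27 + 25*((m:ℝ)+1)^2/18 + 263*((m:ℝ)+1)^3/54 := by
      have step : ∀ j ∈ Icc 1 (m+1), B (j-1)
          = 2*(((j-1:ℕ):ℝ)+1)^2*((H (j-1))^2 - H2 (j-1))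
            - (8*((j-1:ℕ):ℝ)+2)*(((j-1:ℕ):ℝ)+1)*H (j-1)
            + (23*((j-1:ℕ):ℝ)^2 + 17*((j-1:ℕ):ℝ))/2 := by
        intro j hj
        rw [mem_Icc] at hj
        exact hBk (j-1) (by omega)
      rw [Finset.sum_congr rfl step,
        reindex (fun k => 2*((k:ℝ)+1)^2*((H k)^2 - H2 k)
          - (8*(k:ℝ)+2)*((k:ℝ)+1)*H k + (23*(k:ℝ)^2 + 17*(k:ℝ))/2) (m+1),
        T2lem (m+1)]
      push_cast; ring
    have hsum3 : ∑ j ∈ Icc 1 (m+1), M (j-1) * M (m+1-j)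
        = (2/3)*((m:ℝ)+1)*((m:ℝ)+2)*((m:ℝ)+3)*((H m)^2 - H2 m)
          - (122*(m:ℝ)/9 + 44*(m:ℝ)^2/3 + 34*(m:ℝ)^3/9)*H m
          + 257*(m:ℝ)/27 + 146*(m:ℝ)^2/9 + 169*(m:ℝ)^3/27 := by
      have step : ∀ j ∈ Icc 1 (m+1), M (j-1) * M (m+1-j)
          = M (j-1) * M (m - (j-1)) := by
        intro j hj
        rw [mem_Icc] at hj
        congr 2
        omega
      rw [Finset.sum_congr rfl step, reindex (fun k => M k * M (m-k)) (m+1),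
        T3lem m]
    rw [hB (m+1) hn, hsum1, hsum2, hsum3, Hs, H2s]
    have h4 : (m:ℝ)+1 ≠ 0 := by positivity
    push_cast; field_simp; ring
end

section
/- For every natural number n ≥ 1, ∑_{j=1}^{n} H_{n+1−j}/j = ∑_{j=1}^{n−1} H_{n−j}/j + 2H_n/(n+1), where H_k is the k-th harmonic number with H_0 = 0 (an empty sum is 0). -/
open Finset

lemma Hsucc (k : ℕ) : H (k+1) = H k + 1/((k:ℝ)+1) := by
  unfold H
  rw [Finset.sum_Icc_succ_top (by omega)]
  push_cast
  ring

lemma Hreflect (n : ℕ) :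
    ∑ j ∈ Icc 1 n, (1:ℝ)/((n:ℝ)+1-(j:ℝ)) = H n := by
  unfold H
  apply Finset.sum_nbij' (fun j => n+1-j) (fun j => n+1-j)
  · intro a ha; simp only [mem_Icc] at *; omega
  · intro a ha; simp only [mem_Icc] at *; omega
  · intro a ha; simp only [mem_Icc] at *; omega
  · intro a ha; simp only [mem_Icc] at *; omega
  · intro a ha
    simp only [mem_Icc] at ha
    have : ((n+1-a : ℕ):ℝ) = (n:ℝ)+1-(a:ℝ) := by
      have : a ≤ n+1 := by omega
      push_cast [Nat.cast_sub this]
      ring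
    rw [this]

theorem stmt19 (n : ℕ) (hn : 1 ≤ n) :
    ∑ j ∈ Icc 1 n, H (n+1-j)/(j:ℝ)
      = (∑ j ∈ Icc 1 (n-1), H (n-j)/(j:ℝ)) + 2*H n/((n:ℝ)+1) := by
  have key : ∀ j ∈ Icc 1 n, H (n+1-j)/(j:ℝ)
      = H (n-j)/(j:ℝ) + (1/((n:ℝ)+1)) * (1/(j:ℝ) + 1/((n:ℝ)+1-(j:ℝ))) := by
    intro j hj
    simp only [mem_Icc] at hj
    have e1 : n+1-j = (n-j)+1 := by omega
    rw [e1, Hsucc]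
    have e2 : ((n-j : ℕ):ℝ) = (n:ℝ) - (j:ℝ) := by
      push_cast [Nat.cast_sub hj.2]; ring
    rw [e2]
    have hj0 : (0:ℝ) < j := by exact_mod_cast hj.1
    have hnj : (0:ℝ) < (n:ℝ)+1-(j:ℝ) := by
      have : (j:ℝ) ≤ n := by exact_mod_cast hj.2
      linarith
    have hn1 : (0:ℝ) < (n:ℝ)+1 := by positivity
    have h3 : (1:ℝ)+((n:ℝ)-(j:ℝ)) ≠ 0 := by linarith
    have h4 : (n:ℝ)-(j:ℝ)+1 ≠ 0 := by linarith
    field_simp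
    ring
  rw [Finset.sum_congr rfl key, Finset.sum_add_distrib]
  have p1 : ∑ j ∈ Icc 1 n, H (n-j)/(j:ℝ) = ∑ j ∈ Icc 1 (n-1), H (n-j)/(j:ℝ) := by
    have : n = (n-1)+1 := by omega
    rw [this, Finset.sum_Icc_succ_top (by omega)]
    have : H ((n-1)+1-((n-1)+1)) = 0 := by simp [H]
    rw [this]
    simp
  have p2 : ∑ j ∈ Icc 1 n, (1/((n:ℝ)+1)) * (1/(j:ℝ) + 1/((n:ℝ)+1-(j:ℝ)))
      = 2*H n/((n:ℝ)+1) := by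
    rw [← Finset.mul_sum, Finset.sum_add_distrib, Hreflect]
    have : ∑ j ∈ Icc 1 n, (1:ℝ)/(j:ℝ) = H n := rfl
    rw [this]; ring
  rw [p1, p2]
end
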